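/- If c and a are positive integers with 5^c - 1 = 2^a, then c = 1. -/

import Mathlib

theorem stmt_4 (c a : ℕ) (hc : 1 ≤ c) (ha : 1 ≤ a) (h : 5 ^ c - 1 = 2 ^ a) :
    c = 1 := by
  have h5 : 1 ≤ 5 ^ c := Nat.one_le_pow _ _ (by norm_num)
  have h' : 5 ^ c = 2 ^ a + 1 := by omega
  by_cases hA : a ≤ 2
  · interval_cases a
    · have : 5 ^ 1 ≤ 5 ^ c := Nat.pow_le_pow_right (by norm_num) hc
      simp at h'
      omega
    · have h5c : 5 ^ c = 5 ^ 1 := by norm_num at h' ⊢; omega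
      exact Nat.pow_right_injective (by norm_num) h5c
  · exfalso
    push_neg at hA
    -- a ≥ 3, so 2^a ≡ 0 mod 8, so 5^c ≡ 1 mod 8
    have h8 : 2 ^ a % 8 = 0 := by
      have : (8 : ℕ) ∣ 2 ^ a := by
        calc (8 : ℕ) = 2 ^ 3 := by norm_num
        _ ∣ 2 ^ a := Nat.pow_dvd_pow 2 hA
      omega
    have hmod8 : 5 ^ c % 8 = 1 := by omega
    -- 5^c mod 8 = 5^(c % 2) mod 8
    obtain ⟨q, r, hr, hcqr⟩ : ∃ q r, r < 2 ∧ c = 2 * q + r :=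
      ⟨c / 2, c % 2, Nat.mod_lt _ (by norm_num), (Nat.div_add_mod c 2).symm ▸ by omega⟩
    have hpow : 5 ^ c = (5 ^ 2) ^ q * 5 ^ r := by
      rw [hcqr, pow_add, pow_mul]
    have h25_8 : (5 ^ 2 : ℕ) % 8 = 1 := by norm_num
    have hq8 : ((5 ^ 2 : ℕ)) ^ q % 8 = 1 := by
      have : ((5 ^ 2 : ℕ)) ^ q ≡ 1 ^ q [MOD 8] :=
        Nat.ModEq.pow q (by decide)
      simpa [Nat.ModEq] using this
    have hr0 : r = 0 := by
      interval_cases r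
      · rfl
      · exfalso
        have : 5 ^ c % 8 = 5 := by
          rw [hpow]
          rw [Nat.mul_mod, hq8]
          norm_num
        omega
    -- c even, so 3 ∣ 5^c - 1, i.e. 5^c ≡ 1 mod 3, so 3 ∣ 2^a
    have hq3 : ((5 ^ 2 : ℕ)) ^ q % 3 = 1 := by
      have : ((5 ^ 2 : ℕ)) ^ q ≡ 1 ^ q [MOD 3] :=
        Nat.ModEq.pow q (by decide)
      simpa [Nat.ModEq] using this
    have h5c3 : 5 ^ c % 3 = 1 := by
      rw [hpow, hr0]
      simpa [Nat.mul_mod] using hq3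
    have h2a3 : 2 ^ a % 3 = 0 := by omega
    have : (3 : ℕ) ∣ 2 ^ a := by omega
    have := (Nat.prime_three.dvd_of_dvd_pow this)
    omega
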